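/- Let P(y) = Σ_{v∈V} P_v y_v be a linear functional with real coefficients and set ‖P‖₂ = (Σ_{v∈V} P_v²)^{1/2}. For x ∈ [0,1]^V define the linear functional P^x with coefficients P^x_v = P_v (1 − f(x_{N_v}) − g(x_{N_v})). Then for every t ≥ 0, the occupancy process and the deterministic process started at x(0) satisfy E|P(X(t+1)) − P(x(t+1))| ≤ ‖P‖₂ + E|P^{x(t)}(X(t)) − P^{x(t)}(x(t))| + M Σ_{v∈V} |P_v| · E|X_{N_v}(t) − x_{N_v}(t)|. -/

import Mathlib

open MeasureTheory Finset

noncomputable section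

/-- Real value of a Boolean state. -/
def b2r (b : Bool) : ℝ := if b then 1 else 0

/-- Neighborhood average `y_{N_v} = (deg v)⁻¹ ∑_{w ∈ N_v} y_w`. -/
def nbrAvg {V : Type} [Fintype V] (G : SimpleGraph V) [DecidableRel G.Adj]
    (y : V → ℝ) (v : V) : ℝ :=
  (∑ w ∈ G.neighborFinset v, y w) / (G.degree v : ℝ)

/-- `γ(a,b) = a(1 - f(b)) + (1 - a) g(b)`. -/
def gam (f g : ℝ → ℝ) (a b : ℝ) : ℝ := a * (1 - f b) + (1 - a) * g b

/-- One-step transition measure of the occupancy process: from state `X`, the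
coordinates of the next state are independent Bernoulli with success
probability `γ(X_v, X_{N_v})`; this is the corresponding product measure on
`V → Bool`, written out by its mass function. -/
def stepMeasure {V : Type} [Fintype V] [DecidableEq V] (G : SimpleGraph V)
    [DecidableRel G.Adj] (f g : ℝ → ℝ) (X : V → Bool) : Measure (V → Bool) :=
  ∑ y : V → Bool,
    ENNReal.ofReal (∏ v,
        (if y v then gam f g (b2r (X v)) (nbrAvg G (fun w => b2r (X w)) v)
         else 1 - gam f g (b2r (X v)) (nbrAvg G (fun w => b2r (X w)) v)))
      • Measure.dirac y

/-- Law of the occupancy process at time `t`, started (a.s.) at `x0`. -/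
def law {V : Type} [Fintype V] [DecidableEq V] (G : SimpleGraph V)
    [DecidableRel G.Adj] (f g : ℝ → ℝ) (x0 : V → Bool) : ℕ → Measure (V → Bool)
  | 0 => Measure.dirac x0
  | t + 1 => (law G f g x0 t).bind (stepMeasure G f g)

/-- The deterministic process `x(t+1)_v = γ(x(t)_v, x(t)_{N_v})`. -/
def det {V : Type} [Fintype V] (G : SimpleGraph V) [DecidableRel G.Adj]
    (f g : ℝ → ℝ) (x0 : V → ℝ) : ℕ → V → ℝ
  | 0 => x0
  | t + 1 => fun v => gam f g (det G f g x0 t v) (nbrAvg G (det G f g x0 t) v)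

/-! ### Auxiliary lemmas -/

lemma b2r_mem (b : Bool) : b2r b ∈ Set.Icc (0:ℝ) 1 := by
  cases b <;> simp [b2r]

section Aux

variable {V : Type} [Fintype V] [DecidableEq V]
  (G : SimpleGraph V) [DecidableRel G.Adj] (f g : ℝ → ℝ)

lemma nbrAvg_mem {y : V → ℝ} (hy : ∀ w, y w ∈ Set.Icc (0:ℝ) 1) {v : V}
    (hv : 0 < G.degree v) : nbrAvg G y v ∈ Set.Icc (0:ℝ) 1 := by
  have hpos : (0:ℝ) < (G.degree v : ℝ) := by exact_mod_cast hv
  constructor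
  · unfold nbrAvg
    exact div_nonneg (Finset.sum_nonneg fun w _ => (hy w).1) hpos.le
  · unfold nbrAvg
    rw [div_le_one hpos]
    calc ∑ w ∈ G.neighborFinset v, y w ≤ ∑ _w ∈ G.neighborFinset v, (1:ℝ) :=
          Finset.sum_le_sum fun w _ => (hy w).2
      _ = ((G.neighborFinset v).card : ℝ) := by rw [Finset.sum_const, nsmul_eq_mul, mul_one]
      _ = (G.degree v : ℝ) := by rw [SimpleGraph.card_neighborFinset_eq_degree]

lemma gam_mem (hf01 : ∀ a ∈ Set.Icc (0:ℝ) 1, f a ∈ Set.Icc (0:ℝ) 1)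
    (hg01 : ∀ a ∈ Set.Icc (0:ℝ) 1, g a ∈ Set.Icc (0:ℝ) 1)
    {a b : ℝ} (ha : a ∈ Set.Icc (0:ℝ) 1) (hb : b ∈ Set.Icc (0:ℝ) 1) :
    gam f g a b ∈ Set.Icc (0:ℝ) 1 := by
  obtain ⟨hf0, hf1⟩ := hf01 b hb
  obtain ⟨hg0, hg1⟩ := hg01 b hb
  obtain ⟨ha0, ha1⟩ := ha
  constructor
  · unfold gam; nlinarith
  · unfold gam; nlinarith

lemma det_mem (hdeg : ∀ v : V, 0 < G.degree v)
    (hf01 : ∀ a ∈ Set.Icc (0:ℝ) 1, f a ∈ Set.Icc (0:ℝ) 1)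
    (hg01 : ∀ a ∈ Set.Icc (0:ℝ) 1, g a ∈ Set.Icc (0:ℝ) 1)
    (x0 : V → ℝ) (hx0 : ∀ v, x0 v ∈ Set.Icc (0:ℝ) 1) :
    ∀ t v, det G f g x0 t v ∈ Set.Icc (0:ℝ) 1 := by
  intro t
  induction t with
  | zero => exact hx0
  | succ t ih =>
    intro v
    exact gam_mem f g hf01 hg01 (ih v) (nbrAvg_mem G ih (hdeg v))

/-- The Bernoulli parameter of coordinate `v` in one step from `X`. -/
def pb (X : V → Bool) (v : V) : ℝ :=
  gam f g (b2r (X v)) (nbrAvg G (fun w => b2r (X w)) v)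

/-- The weight of outcome `y` in one step from `X`. -/
def wgt (X y : V → Bool) : ℝ :=
  ∏ v, (if y v then pb G f g X v else 1 - pb G f g X v)

lemma pb_mem (hdeg : ∀ v : V, 0 < G.degree v)
    (hf01 : ∀ a ∈ Set.Icc (0:ℝ) 1, f a ∈ Set.Icc (0:ℝ) 1)
    (hg01 : ∀ a ∈ Set.Icc (0:ℝ) 1, g a ∈ Set.Icc (0:ℝ) 1)
    (X : V → Bool) (v : V) : pb G f g X v ∈ Set.Icc (0:ℝ) 1 :=
  gam_mem f g hf01 hg01 (b2r_mem _) (nbrAvg_mem G (fun w => b2r_mem _) (hdeg v))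

lemma wgt_nonneg (hdeg : ∀ v : V, 0 < G.degree v)
    (hf01 : ∀ a ∈ Set.Icc (0:ℝ) 1, f a ∈ Set.Icc (0:ℝ) 1)
    (hg01 : ∀ a ∈ Set.Icc (0:ℝ) 1, g a ∈ Set.Icc (0:ℝ) 1)
    (X y : V → Bool) : 0 ≤ wgt G f g X y := by
  refine Finset.prod_nonneg fun v _ => ?_
  obtain ⟨h0, h1⟩ := pb_mem G f g hdeg hf01 hg01 X v
  split <;> linarith

lemma stepMeasure_eq (X : V → Bool) :
    stepMeasure G f g X = ∑ y : V → Bool, ENNReal.ofReal (wgt G f g X y) • Measure.dirac y :=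
  rfl

/-- Sum over all boolean configurations of a product factorizes. -/
lemma sum_prod_bool (F : V → Bool → ℝ) :
    ∑ y : V → Bool, ∏ v, F v (y v) = ∏ v, (F v true + F v false) := by
  rw [← Fintype.prod_sum]
  exact Finset.prod_congr rfl fun v _ => by rw [Fintype.sum_bool]

lemma sum_wgt (hdeg : ∀ v : V, 0 < G.degree v) (X : V → Bool) :
    ∑ y : V → Bool, wgt G f g X y = 1 := by
  unfold wgt
  rw [sum_prod_bool (fun v b => if b then pb G f g X v else 1 - pb G f g X v)]
  simp

/-- Mass function of the law at time `t`. -/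
def mass (x0 : V → Bool) : ℕ → (V → Bool) → ℝ
  | 0 => fun y => if y = x0 then 1 else 0
  | t + 1 => fun y => ∑ X : V → Bool, mass x0 t X * wgt G f g X y

lemma mass_nonneg (hdeg : ∀ v : V, 0 < G.degree v)
    (hf01 : ∀ a ∈ Set.Icc (0:ℝ) 1, f a ∈ Set.Icc (0:ℝ) 1)
    (hg01 : ∀ a ∈ Set.Icc (0:ℝ) 1, g a ∈ Set.Icc (0:ℝ) 1)
    (x0 : V → Bool) : ∀ t y, 0 ≤ mass G f g x0 t y := by
  intro t
  induction t with
  | zero => intro y; unfold mass; split <;> norm_num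
  | succ t ih =>
    intro y
    exact Finset.sum_nonneg fun X _ =>
      mul_nonneg (ih X) (wgt_nonneg G f g hdeg hf01 hg01 X y)

lemma sum_mass (hdeg : ∀ v : V, 0 < G.degree v) (x0 : V → Bool) :
    ∀ t, ∑ y : V → Bool, mass G f g x0 t y = 1 := by
  intro t
  induction t with
  | zero => simp [mass]
  | succ t ih =>
    show ∑ y : V → Bool, ∑ X : V → Bool, mass G f g x0 t X * wgt G f g X y = 1
    rw [Finset.sum_comm]
    calc ∑ X : V → Bool, ∑ y : V → Bool, mass G f g x0 t X * wgt G f g X y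
        = ∑ X : V → Bool, mass G f g x0 t X * ∑ y : V → Bool, wgt G f g X y := by
          simp [Finset.mul_sum]
      _ = 1 := by
          rw [← ih]
          exact Finset.sum_congr rfl fun X _ => by rw [sum_wgt G f g hdeg X, mul_one]

lemma law_eq (hdeg : ∀ v : V, 0 < G.degree v)
    (hf01 : ∀ a ∈ Set.Icc (0:ℝ) 1, f a ∈ Set.Icc (0:ℝ) 1)
    (hg01 : ∀ a ∈ Set.Icc (0:ℝ) 1, g a ∈ Set.Icc (0:ℝ) 1)
    (x0 : V → Bool) :
    ∀ t, law G f g x0 t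
      = ∑ y : V → Bool, ENNReal.ofReal (mass G f g x0 t y) • Measure.dirac y := by
  intro t
  induction t with
  | zero =>
    show Measure.dirac x0 = _
    rw [Finset.sum_eq_single x0 (fun y _ hy => by simp [mass, hy]) (by simp)]
    simp [mass]
  | succ t ih =>
    show (law G f g x0 t).bind (stepMeasure G f g) = _
    have hstep : Measurable (stepMeasure G f g) := Measurable.of_discrete
    ext s hs
    rw [Measure.bind_apply hs hstep.aemeasurable, ih, lintegral_finset_sum_measure]
    have hterm : ∀ X : V → Bool,
        ∫⁻ a, stepMeasure G f g a s ∂(ENNReal.ofReal (mass G f g x0 t X) • Measure.dirac X)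
          = ENNReal.ofReal (mass G f g x0 t X) * stepMeasure G f g X s := by
      intro X
      rw [lintegral_smul_measure, lintegral_dirac, smul_eq_mul]
    rw [Finset.sum_congr rfl fun X _ => hterm X]
    have hsapply : ∀ X : V → Bool, stepMeasure G f g X s
        = ∑ y : V → Bool, ENNReal.ofReal (wgt G f g X y) * Measure.dirac y s := by
      intro X
      rw [stepMeasure_eq, Measure.finset_sum_apply]
      exact Finset.sum_congr rfl fun y _ => by rw [Measure.smul_apply, smul_eq_mul]
    rw [Measure.finset_sum_apply]
    calc ∑ X : V → Bool, ENNReal.ofReal (mass G f g x0 t X) * stepMeasure G f g X s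
        = ∑ X : V → Bool, ∑ y : V → Bool,
            ENNReal.ofReal (mass G f g x0 t X) * (ENNReal.ofReal (wgt G f g X y)
              * Measure.dirac y s) := by
          exact Finset.sum_congr rfl fun X _ => by rw [hsapply X, Finset.mul_sum]
      _ = ∑ y : V → Bool, ∑ X : V → Bool,
            ENNReal.ofReal (mass G f g x0 t X) * ENNReal.ofReal (wgt G f g X y)
              * Measure.dirac y s := by
          rw [Finset.sum_comm]
          exact Finset.sum_congr rfl fun X _ => Finset.sum_congr rfl fun y _ => by
            rw [mul_assoc]
      _ = ∑ y : V → Bool,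
            (ENNReal.ofReal (mass G f g x0 (t+1) y) • Measure.dirac y) s := by
          refine Finset.sum_congr rfl fun y _ => ?_
          rw [Measure.smul_apply, smul_eq_mul, ← Finset.sum_mul]
          congr 1
          show _ = ENNReal.ofReal (∑ X : V → Bool, mass G f g x0 t X * wgt G f g X y)
          rw [ENNReal.ofReal_sum_of_nonneg fun X _ =>
            mul_nonneg (mass_nonneg G f g hdeg hf01 hg01 x0 t X)
              (wgt_nonneg G f g hdeg hf01 hg01 X y)]
          exact Finset.sum_congr rfl fun X _ =>
            (ENNReal.ofReal_mul (mass_nonneg G f g hdeg hf01 hg01 x0 t X)).symm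

lemma integral_sum_smul_dirac {α : Type} [Fintype α] [MeasurableSpace α]
    [MeasurableSingletonClass α] (c : α → ℝ) (hc : ∀ a, 0 ≤ c a) (h : α → ℝ) :
    ∫ y, h y ∂(∑ a : α, ENNReal.ofReal (c a) • Measure.dirac a) = ∑ a : α, c a * h a := by
  have hint : ∀ a : α, Integrable h (ENNReal.ofReal (c a) • Measure.dirac a) := by
    intro a
    haveI : IsFiniteMeasure (ENNReal.ofReal (c a) • Measure.dirac a) := by
      constructor
      rw [Measure.smul_apply, smul_eq_mul]
      exact ENNReal.mul_lt_top ENNReal.ofReal_lt_top (by simp)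
    exact Integrable.of_finite
  rw [integral_finset_sum_measure fun a _ => hint a]
  refine Finset.sum_congr rfl fun a _ => ?_
  rw [integral_smul_measure, integral_dirac, smul_eq_mul, ENNReal.toReal_ofReal (hc a)]

lemma integral_law (hdeg : ∀ v : V, 0 < G.degree v)
    (hf01 : ∀ a ∈ Set.Icc (0:ℝ) 1, f a ∈ Set.Icc (0:ℝ) 1)
    (hg01 : ∀ a ∈ Set.Icc (0:ℝ) 1, g a ∈ Set.Icc (0:ℝ) 1)
    (x0 : V → Bool) (t : ℕ) (h : (V → Bool) → ℝ) :
    ∫ y, h y ∂(law G f g x0 t) = ∑ y : V → Bool, mass G f g x0 t y * h y := by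
  rw [law_eq G f g hdeg hf01 hg01 x0 t,
    integral_sum_smul_dirac _ (mass_nonneg G f g hdeg hf01 hg01 x0 t) h]

end Aux


section Aux2

variable {V : Type} [Fintype V] [DecidableEq V]
  (G : SimpleGraph V) [DecidableRel G.Adj] (f g : ℝ → ℝ)

/-- Second moment of a linear functional under an independent Bernoulli product. -/
lemma second_moment (p P : V → ℝ) :
    ∑ y : V → Bool,
        (∏ v, (if y v then p v else 1 - p v)) * (∑ v, P v * (b2r (y v) - p v)) ^ 2
      = ∑ v, P v ^ 2 * (p v * (1 - p v)) := by
  classical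
  set F : V → Bool → ℝ := fun v b => if b then p v else 1 - p v with hF
  set q : V → Bool → ℝ := fun v b => b2r b - p v with hq
  have key : ∀ u u' : V,
      (∑ y : V → Bool, (∏ v, F v (y v)) * q u (y u) * q u' (y u'))
        = if u = u' then p u * (1 - p u) else 0 := by
    intro u u'
    have hGy : ∀ y : V → Bool, (∏ v, F v (y v)) * q u (y u) * q u' (y u')
        = ∏ v, (F v (y v) * (if u = v then q u (y v) else 1)
            * (if u' = v then q u' (y v) else 1)) := by
      intro y
      rw [Finset.prod_mul_distrib, Finset.prod_mul_distrib, Finset.prod_ite_eq,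
        Finset.prod_ite_eq]
      simp
    rw [Finset.sum_congr rfl fun y _ => hGy y,
      sum_prod_bool (fun v b => F v b * (if u = v then q u b else 1)
        * (if u' = v then q u' b else 1))]
    by_cases huu : u = u'
    · subst huu
      rw [if_pos rfl]
      rw [Finset.prod_eq_single u
        (fun v _ hvz => by
          simp only [if_neg (fun h : u = v => hvz h.symm), mul_one, hF]
          simp)
        (by simp)]
      simp only [if_pos rfl, hF, hq, b2r]
      norm_num
      ring
    · rw [if_neg huu]
      refine Finset.prod_eq_zero (Finset.mem_univ u) ?_
      simp only [if_pos rfl, if_neg (fun h : u' = u => huu h.symm), mul_one, hF, hq, b2r]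
      norm_num
      ring
  calc ∑ y : V → Bool, (∏ v, F v (y v)) * (∑ v, P v * q v (y v)) ^ 2
      = ∑ y : V → Bool, ∑ u, ∑ u',
          (P u * P u') * ((∏ v, F v (y v)) * q u (y u) * q u' (y u')) := by
        refine Finset.sum_congr rfl fun y _ => ?_
        rw [sq, Finset.sum_mul_sum, Finset.mul_sum]
        refine Finset.sum_congr rfl fun u _ => ?_
        rw [Finset.mul_sum]
        exact Finset.sum_congr rfl fun u' _ => by ring
    _ = ∑ u, ∑ u', (P u * P u')
          * (∑ y : V → Bool, (∏ v, F v (y v)) * q u (y u) * q u' (y u')) := by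
        rw [Finset.sum_comm]
        refine Finset.sum_congr rfl fun u _ => ?_
        rw [Finset.sum_comm]
        refine Finset.sum_congr rfl fun u' _ => ?_
        rw [Finset.mul_sum]
    _ = ∑ u, P u ^ 2 * (p u * (1 - p u)) := by
        refine Finset.sum_congr rfl fun u _ => ?_
        rw [Finset.sum_congr rfl fun u' _ => by rw [key u u']]
        rw [Finset.sum_congr rfl fun u' (_ : u' ∈ univ) =>
          (mul_ite (u = u') (P u * P u') (p u * (1 - p u)) 0).trans (by rw [mul_zero])]
        rw [Finset.sum_ite_eq univ u (fun u' => P u * P u' * (p u * (1 - p u)))]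
        simp [sq, mul_assoc]

/-- Weighted mean absolute deviation is at most the square root of the second moment. -/
lemma wavg_abs_le_sqrt {α : Type} [Fintype α] (w Z : α → ℝ)
    (hw : ∀ y, 0 ≤ w y) (hw1 : ∑ y, w y = 1) :
    ∑ y, w y * |Z y| ≤ Real.sqrt (∑ y, w y * Z y ^ 2) := by
  have hnn : 0 ≤ ∑ y, w y * |Z y| :=
    Finset.sum_nonneg fun y _ => mul_nonneg (hw y) (abs_nonneg _)
  have hnn2 : 0 ≤ ∑ y, w y * Z y ^ 2 :=
    Finset.sum_nonneg fun y _ => mul_nonneg (hw y) (sq_nonneg _)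
  rw [Real.le_sqrt hnn hnn2]
  calc (∑ y, w y * |Z y|) ^ 2
      = (∑ y, Real.sqrt (w y) * (Real.sqrt (w y) * |Z y|)) ^ 2 := by
        congr 1
        exact Finset.sum_congr rfl fun y _ => by
          rw [← mul_assoc, Real.mul_self_sqrt (hw y)]
    _ ≤ (∑ y, Real.sqrt (w y) ^ 2) * ∑ y, (Real.sqrt (w y) * |Z y|) ^ 2 :=
        Finset.sum_mul_sq_le_sq_mul_sq _ _ _
    _ = (∑ y, w y) * ∑ y, w y * Z y ^ 2 := by
        congr 1
        · exact Finset.sum_congr rfl fun y _ => Real.sq_sqrt (hw y)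
        · exact Finset.sum_congr rfl fun y _ => by
            rw [mul_pow, Real.sq_sqrt (hw y), sq_abs]
    _ = ∑ y, w y * Z y ^ 2 := by rw [hw1, one_mul]

/-- Core pointwise (in the previous state `X`) inequality. -/
lemma core (hdeg : ∀ v : V, 0 < G.degree v) (M : ℝ)
    (hf01 : ∀ a ∈ Set.Icc (0:ℝ) 1, f a ∈ Set.Icc (0:ℝ) 1)
    (hg01 : ∀ a ∈ Set.Icc (0:ℝ) 1, g a ∈ Set.Icc (0:ℝ) 1)
    (hfLip : ∀ a ∈ Set.Icc (0:ℝ) 1, ∀ b ∈ Set.Icc (0:ℝ) 1, |f a - f b| ≤ M * |a - b|)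
    (hgLip : ∀ a ∈ Set.Icc (0:ℝ) 1, ∀ b ∈ Set.Icc (0:ℝ) 1, |g a - g b| ≤ M * |a - b|)
    (P : V → ℝ) (x : V → ℝ) (hx : ∀ v, x v ∈ Set.Icc (0:ℝ) 1) (X : V → Bool) :
    ∑ y : V → Bool, wgt G f g X y
        * |∑ v, P v * b2r (y v) - ∑ v, P v * gam f g (x v) (nbrAvg G x v)|
      ≤ Real.sqrt (∑ v, P v ^ 2)
        + |∑ v, (P v * (1 - f (nbrAvg G x v) - g (nbrAvg G x v))) * b2r (X v)
            - ∑ v, (P v * (1 - f (nbrAvg G x v) - g (nbrAvg G x v))) * x v|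
        + M * ∑ v, |P v| * |nbrAvg G (fun w => b2r (X w)) v - nbrAvg G x v| := by
  classical
  have hM : 0 ≤ M := by
    have h := hfLip 0 (by norm_num) 1 (by norm_num)
    have := abs_nonneg (f 0 - f 1)
    simp only [zero_sub, abs_neg, abs_one, mul_one] at h
    linarith
  have hp : ∀ v, pb G f g X v ∈ Set.Icc (0:ℝ) 1 := pb_mem G f g hdeg hf01 hg01 X
  have hxb : ∀ v, nbrAvg G x v ∈ Set.Icc (0:ℝ) 1 := fun v => nbrAvg_mem G hx (hdeg v)
  have hab : ∀ v, nbrAvg G (fun w => b2r (X w)) v ∈ Set.Icc (0:ℝ) 1 :=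
    fun v => nbrAvg_mem G (fun w => b2r_mem _) (hdeg v)
  have hwnn : ∀ y, 0 ≤ wgt G f g X y := wgt_nonneg G f g hdeg hf01 hg01 X
  have hw1 : ∑ y : V → Bool, wgt G f g X y = 1 := sum_wgt G f g hdeg X
  set A : ℝ := |∑ v, (P v * (1 - f (nbrAvg G x v) - g (nbrAvg G x v))) * b2r (X v)
            - ∑ v, (P v * (1 - f (nbrAvg G x v) - g (nbrAvg G x v))) * x v| with hA
  set C : ℝ := |∑ v, P v * (pb G f g X v - gam f g (x v) (nbrAvg G x v))| with hC
  -- Step 1: pointwise triangle inequality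
  have h1 : ∀ y : V → Bool,
      |∑ v, P v * b2r (y v) - ∑ v, P v * gam f g (x v) (nbrAvg G x v)|
        ≤ |∑ v, P v * (b2r (y v) - pb G f g X v)| + C := by
    intro y
    have hsplit : (∑ v, P v * b2r (y v)) - ∑ v, P v * gam f g (x v) (nbrAvg G x v)
        = (∑ v, P v * (b2r (y v) - pb G f g X v))
          + ∑ v, P v * (pb G f g X v - gam f g (x v) (nbrAvg G x v)) := by
      rw [← Finset.sum_add_distrib, ← Finset.sum_sub_distrib]
      exact Finset.sum_congr rfl fun v _ => by ring
    rw [hsplit]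
    exact abs_add_le _ _
  -- Step 2: integrate the triangle inequality
  have h2 : ∑ y : V → Bool, wgt G f g X y
        * |∑ v, P v * b2r (y v) - ∑ v, P v * gam f g (x v) (nbrAvg G x v)|
      ≤ (∑ y : V → Bool, wgt G f g X y * |∑ v, P v * (b2r (y v) - pb G f g X v)|) + C := by
    calc ∑ y : V → Bool, wgt G f g X y
          * |∑ v, P v * b2r (y v) - ∑ v, P v * gam f g (x v) (nbrAvg G x v)|
        ≤ ∑ y : V → Bool, wgt G f g X y
            * (|∑ v, P v * (b2r (y v) - pb G f g X v)| + C) :=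
          Finset.sum_le_sum fun y _ => mul_le_mul_of_nonneg_left (h1 y) (hwnn y)
      _ = (∑ y : V → Bool, wgt G f g X y * |∑ v, P v * (b2r (y v) - pb G f g X v)|)
            + (∑ y : V → Bool, wgt G f g X y) * C := by
          rw [Finset.sum_mul, ← Finset.sum_add_distrib]
          exact Finset.sum_congr rfl fun y _ => by ring
      _ = _ := by rw [hw1, one_mul]
  -- Step 3: fluctuation term
  have h3 : ∑ y : V → Bool, wgt G f g X y * |∑ v, P v * (b2r (y v) - pb G f g X v)|
      ≤ Real.sqrt (∑ v, P v ^ 2) := by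
    calc ∑ y : V → Bool, wgt G f g X y * |∑ v, P v * (b2r (y v) - pb G f g X v)|
        ≤ Real.sqrt (∑ y : V → Bool, wgt G f g X y
            * (∑ v, P v * (b2r (y v) - pb G f g X v)) ^ 2) :=
          wavg_abs_le_sqrt _ _ hwnn hw1
      _ = Real.sqrt (∑ v, P v ^ 2 * (pb G f g X v * (1 - pb G f g X v))) := by
          rw [show (∑ y : V → Bool, wgt G f g X y
              * (∑ v, P v * (b2r (y v) - pb G f g X v)) ^ 2)
            = ∑ v, P v ^ 2 * (pb G f g X v * (1 - pb G f g X v)) from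
            second_moment (fun v => pb G f g X v) P]
      _ ≤ Real.sqrt (∑ v, P v ^ 2) := by
          refine Real.sqrt_le_sqrt (Finset.sum_le_sum fun v _ => ?_)
          obtain ⟨h0, h1'⟩ := hp v
          nlinarith [mul_nonneg (sq_nonneg (P v)) (sub_nonneg.2 h1'),
            sq_nonneg (P v * pb G f g X v)]
  -- Step 4: the drift term
  have h4 : C ≤ A + M * ∑ v, |P v| * |nbrAvg G (fun w => b2r (X w)) v - nbrAvg G x v| := by
    have hsplit : ∀ v, P v * (pb G f g X v - gam f g (x v) (nbrAvg G x v))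
        = ((P v * (1 - f (nbrAvg G x v) - g (nbrAvg G x v))) * b2r (X v)
            - (P v * (1 - f (nbrAvg G x v) - g (nbrAvg G x v))) * x v)
          + P v * (b2r (X v) * (f (nbrAvg G x v) - f (nbrAvg G (fun w => b2r (X w)) v))
              + (1 - b2r (X v))
                * (g (nbrAvg G (fun w => b2r (X w)) v) - g (nbrAvg G x v))) := by
      intro v
      unfold pb gam
      ring
    have hr : ∀ v, |P v * (b2r (X v) * (f (nbrAvg G x v) - f (nbrAvg G (fun w => b2r (X w)) v))
        + (1 - b2r (X v)) * (g (nbrAvg G (fun w => b2r (X w)) v) - g (nbrAvg G x v)))|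
        ≤ |P v| * (M * |nbrAvg G (fun w => b2r (X w)) v - nbrAvg G x v|) := by
      intro v
      rw [abs_mul]
      refine mul_le_mul_of_nonneg_left ?_ (abs_nonneg _)
      obtain ⟨ha0, ha1⟩ := b2r_mem (X v)
      have hf' := hfLip (nbrAvg G x v) (hxb v) (nbrAvg G (fun w => b2r (X w)) v) (hab v)
      have hg' := hgLip (nbrAvg G (fun w => b2r (X w)) v) (hab v) (nbrAvg G x v) (hxb v)
      have habs1 : |b2r (X v) * (f (nbrAvg G x v) - f (nbrAvg G (fun w => b2r (X w)) v))|
          = b2r (X v) * |f (nbrAvg G x v) - f (nbrAvg G (fun w => b2r (X w)) v)| := by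
        rw [abs_mul, abs_of_nonneg ha0]
      have habs2 : |(1 - b2r (X v))
          * (g (nbrAvg G (fun w => b2r (X w)) v) - g (nbrAvg G x v))|
          = (1 - b2r (X v)) * |g (nbrAvg G (fun w => b2r (X w)) v) - g (nbrAvg G x v)| := by
        rw [abs_mul, abs_of_nonneg (by linarith)]
      have htri := abs_add_le
        (b2r (X v) * (f (nbrAvg G x v) - f (nbrAvg G (fun w => b2r (X w)) v)))
        ((1 - b2r (X v)) * (g (nbrAvg G (fun w => b2r (X w)) v) - g (nbrAvg G x v)))
      rw [habs1, habs2] at htri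
      have hcomm : |nbrAvg G x v - nbrAvg G (fun w => b2r (X w)) v|
          = |nbrAvg G (fun w => b2r (X w)) v - nbrAvg G x v| := abs_sub_comm _ _
      rw [hcomm] at hf'
      nlinarith [abs_nonneg (f (nbrAvg G x v) - f (nbrAvg G (fun w => b2r (X w)) v)),
        abs_nonneg (g (nbrAvg G (fun w => b2r (X w)) v) - g (nbrAvg G x v)),
        abs_nonneg (nbrAvg G (fun w => b2r (X w)) v - nbrAvg G x v)]
    calc C = |((∑ v, (P v * (1 - f (nbrAvg G x v) - g (nbrAvg G x v))) * b2r (X v))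
            - ∑ v, (P v * (1 - f (nbrAvg G x v) - g (nbrAvg G x v))) * x v)
          + ∑ v, P v * (b2r (X v) * (f (nbrAvg G x v) - f (nbrAvg G (fun w => b2r (X w)) v))
              + (1 - b2r (X v))
                * (g (nbrAvg G (fun w => b2r (X w)) v) - g (nbrAvg G x v)))| := by
          rw [hC, Finset.sum_congr rfl fun v _ => hsplit v, Finset.sum_add_distrib,
            Finset.sum_sub_distrib]
      _ ≤ A + |∑ v, P v * (b2r (X v) * (f (nbrAvg G x v) - f (nbrAvg G (fun w => b2r (X w)) v))
              + (1 - b2r (X v))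
                * (g (nbrAvg G (fun w => b2r (X w)) v) - g (nbrAvg G x v)))| :=
          abs_add_le _ _
      _ ≤ A + ∑ v, |P v| * (M * |nbrAvg G (fun w => b2r (X w)) v - nbrAvg G x v|) := by
          refine add_le_add (le_refl A) (le_trans (Finset.abs_sum_le_sum_abs _ _)
            (Finset.sum_le_sum fun v _ => hr v))
      _ = A + M * ∑ v, |P v| * |nbrAvg G (fun w => b2r (X w)) v - nbrAvg G x v| := by
          rw [Finset.mul_sum]
          congr 1
          exact Finset.sum_congr rfl fun v _ => by ring
  linarith

end Aux2


/-- **Lemma 2.1**: one-step bound for a linear functional `P(y) = ∑_v P_v y_v`. -/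
theorem linear_functional_one_step_bound
    {V : Type} [Fintype V] [DecidableEq V]
    (G : SimpleGraph V) [DecidableRel G.Adj]
    (hdeg : ∀ v : V, 0 < G.degree v)
    (f g : ℝ → ℝ) (M : ℝ)
    (hf01 : ∀ a ∈ Set.Icc (0:ℝ) 1, f a ∈ Set.Icc (0:ℝ) 1)
    (hg01 : ∀ a ∈ Set.Icc (0:ℝ) 1, g a ∈ Set.Icc (0:ℝ) 1)
    (hfLip : ∀ a ∈ Set.Icc (0:ℝ) 1, ∀ b ∈ Set.Icc (0:ℝ) 1, |f a - f b| ≤ M * |a - b|)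
    (hgLip : ∀ a ∈ Set.Icc (0:ℝ) 1, ∀ b ∈ Set.Icc (0:ℝ) 1, |g a - g b| ≤ M * |a - b|)
    (x0 : V → Bool) (P : V → ℝ) (t : ℕ) :
    -- coefficients of the linear functional `P^{x(t)}`
    (fun Px : V → ℝ =>
      ∫ y, |∑ v, P v * b2r (y v) - ∑ v, P v * det G f g (fun w => b2r (x0 w)) (t + 1) v|
          ∂ (law G f g x0 (t + 1))
        ≤ Real.sqrt (∑ v, P v ^ 2)
          + (∫ y, |∑ v, Px v * b2r (y v) - ∑ v, Px v * det G f g (fun w => b2r (x0 w)) t v|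
              ∂ (law G f g x0 t))
          + M * ∑ v, |P v| *
              ∫ y, |nbrAvg G (fun w => b2r (y w)) v
                    - nbrAvg G (det G f g (fun w => b2r (x0 w)) t) v| ∂ (law G f g x0 t))
      (fun v => P v * (1 - f (nbrAvg G (det G f g (fun w => b2r (x0 w)) t) v)
                         - g (nbrAvg G (det G f g (fun w => b2r (x0 w)) t) v))) := by
  dsimp only
  have hx : ∀ v, det G f g (fun w => b2r (x0 w)) t v ∈ Set.Icc (0:ℝ) 1 :=
    det_mem G f g hdeg hf01 hg01 _ (fun v => b2r_mem _) t
  set x : V → ℝ := det G f g (fun w => b2r (x0 w)) t with hxdef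
  have hdet1 : ∀ v, det G f g (fun w => b2r (x0 w)) (t + 1) v
      = gam f g (x v) (nbrAvg G x v) := fun v => rfl
  simp only [integral_law G f g hdeg hf01 hg01 x0 (t + 1),
    integral_law G f g hdeg hf01 hg01 x0 t, hdet1]
  set m := mass G f g x0 t with hm
  have hmnn : ∀ X, 0 ≤ m X := mass_nonneg G f g hdeg hf01 hg01 x0 t
  have hm1 : ∑ X : V → Bool, m X = 1 := sum_mass G f g hdeg x0 t
  have hmass1 : ∀ y : V → Bool, mass G f g x0 (t + 1) y
      = ∑ X : V → Bool, m X * wgt G f g X y := fun y => rfl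
  set Q := Real.sqrt (∑ v, P v ^ 2) with hQ
  set A : (V → Bool) → ℝ := fun X =>
    |∑ v, (P v * (1 - f (nbrAvg G x v) - g (nbrAvg G x v))) * b2r (X v)
      - ∑ v, (P v * (1 - f (nbrAvg G x v) - g (nbrAvg G x v))) * x v| with hAdef
  set B : V → (V → Bool) → ℝ := fun v X =>
    |nbrAvg G (fun w => b2r (X w)) v - nbrAvg G x v| with hBdef
  set D : (V → Bool) → ℝ := fun y =>
    |∑ v, P v * b2r (y v) - ∑ v, P v * gam f g (x v) (nbrAvg G x v)| with hDdef
  calc ∑ y : V → Bool, mass G f g x0 (t + 1) y * D y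
      = ∑ X : V → Bool, m X * (∑ y : V → Bool, wgt G f g X y * D y) := by
        rw [Finset.sum_congr rfl fun y (_ : y ∈ univ) => by
          rw [hmass1 y, Finset.sum_mul]]
        rw [Finset.sum_comm]
        exact Finset.sum_congr rfl fun X _ => by
          rw [Finset.mul_sum]
          exact Finset.sum_congr rfl fun y _ => by ring
    _ ≤ ∑ X : V → Bool, m X * (Q + A X + M * ∑ v, |P v| * B v X) := by
        refine Finset.sum_le_sum fun X _ => mul_le_mul_of_nonneg_left ?_ (hmnn X)
        exact core G f g hdeg M hf01 hg01 hfLip hgLip P x hx X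
    _ = Q + (∑ X : V → Bool, m X * A X)
          + M * ∑ v, |P v| * (∑ X : V → Bool, m X * B v X) := by
        simp only [mul_add]
        rw [Finset.sum_add_distrib, Finset.sum_add_distrib]
        congr 1
        · congr 1
          rw [← Finset.sum_mul, hm1, one_mul]
        · rw [Finset.sum_congr rfl fun X (_ : X ∈ univ) =>
            (show m X * (M * ∑ v, |P v| * B v X)
              = M * (m X * ∑ v, |P v| * B v X) from by ring)]
          rw [← Finset.mul_sum]
          congr 1
          rw [Finset.sum_congr rfl fun X (_ : X ∈ univ) => Finset.mul_sum
            (univ : Finset V) (fun v => |P v| * B v X) (m X)]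
          rw [Finset.sum_comm]
          refine Finset.sum_congr rfl fun v _ => ?_
          rw [Finset.mul_sum]
          exact Finset.sum_congr rfl fun X _ => by ring
end
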